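/- Let c ∈ [0,1) and let T ∈ B(H,K) with [T] > 0. Suppose x₁, x₂ are unit vectors with x₁ ⊥ x₂, Tx₁ ⊥ Tx₂, ‖Tx₁‖ = [T], ‖Tx₂‖ = ‖T‖. Put u = x₂ + √((1-c)/(1+c))·x₁ and v = x₂ − √((1-c)/(1+c))·x₁. Then |⟨Tu,Tv⟩/(‖Tu‖·‖Tv‖) − c| = (1−c²)(‖T‖² − [T]²)/((1+c)‖T‖² + (1−c)[T]²). -/

import Mathlib

open scoped RealInnerProductSpace

/-- The minimum modulus `[T]` of a bounded linear map: the infimum of `‖T x‖`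
over unit vectors `x`. -/
noncomputable def minMod {H K : Type*} [NormedAddCommGroup H] [InnerProductSpace ℝ H]
    [NormedAddCommGroup K] [InnerProductSpace ℝ K] (T : H →L[ℝ] K) : ℝ :=
  ⨅ x : {x : H // ‖x‖ = 1}, ‖T x‖

/-- `T` is `(ε, c)`-angle preserving. -/
def AnglePres {H K : Type*} [NormedAddCommGroup H] [InnerProductSpace ℝ H]
    [NormedAddCommGroup K] [InnerProductSpace ℝ K] (c ε : ℝ) (T : H →L[ℝ] K) : Prop :=
  ∀ x y : H, ⟪x, y⟫ = c * ‖x‖ * ‖y‖ →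
    |⟪T x, T y⟫ - c * ‖T x‖ * ‖T y‖| ≤ ε * ‖T x‖ * ‖T y‖

/-- `ε̂(T, c)`: the smallest `ε` for which `T` is `(ε, c)`-angle preserving. -/
noncomputable def epsHat {H K : Type*} [NormedAddCommGroup H] [InnerProductSpace ℝ H]
    [NormedAddCommGroup K] [InnerProductSpace ℝ K] (c : ℝ) (T : H →L[ℝ] K) : ℝ :=
  sInf {ε : ℝ | ε ∈ Set.Icc 0 (1 + |c|) ∧ AnglePres c ε T}

set_option maxHeartbeats 1000000 in
theorem stmt_10 {H K : Type*} [NormedAddCommGroup H] [InnerProductSpace ℝ H] [CompleteSpace H]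
    [NormedAddCommGroup K] [InnerProductSpace ℝ K] [CompleteSpace K]
    (c : ℝ) (hc : c ∈ Set.Ico (0 : ℝ) 1) (T : H →L[ℝ] K) (hmin : 0 < minMod T)
    (x₁ x₂ : H) (hx₁ : ‖x₁‖ = 1) (hx₂ : ‖x₂‖ = 1) (horth : ⟪x₁, x₂⟫ = 0)
    (horthT : ⟪T x₁, T x₂⟫ = 0) (h₁ : ‖T x₁‖ = minMod T) (h₂ : ‖T x₂‖ = ‖T‖)
    (u v : H) (hu : u = x₂ + Real.sqrt ((1 - c) / (1 + c)) • x₁)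
    (hv : v = x₂ - Real.sqrt ((1 - c) / (1 + c)) • x₁) :
    |⟪T u, T v⟫ / (‖T u‖ * ‖T v‖) - c| =
      (1 - c ^ 2) * (‖T‖ ^ 2 - (minMod T) ^ 2) /
        ((1 + c) * ‖T‖ ^ 2 + (1 - c) * (minMod T) ^ 2) := by
  obtain ⟨hc0, hc1⟩ := hc
  set s := Real.sqrt ((1 - c) / (1 + c)) with hs
  set m := minMod T with hm
  set M := ‖T‖ with hM
  have h1c : (0:ℝ) < 1 + c := by linarith
  have h2c : (0:ℝ) < 1 - c := by linarith
  have hs2 : s ^ 2 = (1 - c) / (1 + c) := Real.sq_sqrt (by positivity)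
  have hmM : m ≤ M := by
    rw [← h₁]
    calc ‖T x₁‖ ≤ ‖T‖ * ‖x₁‖ := T.le_opNorm x₁
    _ = M := by rw [hx₁, mul_one]
  have hM0 : 0 < M := lt_of_lt_of_le hmin hmM
  have horthT' : ⟪T x₂, T x₁⟫ = 0 := by rw [real_inner_comm]; exact horthT
  have hTu : T u = T x₂ + s • T x₁ := by rw [hu]; simp
  have hTv : T v = T x₂ - s • T x₁ := by rw [hv]; simp
  have hinner : ⟪T u, T v⟫ = M ^ 2 - s ^ 2 * m ^ 2 := by
    rw [hTu, hTv]
    simp only [inner_add_left, inner_sub_right, real_inner_smul_left, real_inner_smul_right,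
      real_inner_self_eq_norm_sq, horthT, horthT', h₁, h₂, norm_smul, Real.norm_eq_abs,
      mul_pow, sq_abs]
    ring
  have hnu : ‖T u‖ ^ 2 = M ^ 2 + s ^ 2 * m ^ 2 := by
    rw [← real_inner_self_eq_norm_sq, hTu]
    simp only [inner_add_left, inner_add_right, real_inner_smul_left, real_inner_smul_right,
      real_inner_self_eq_norm_sq, horthT, horthT', h₁, h₂, norm_smul, Real.norm_eq_abs,
      mul_pow, sq_abs]
    ring
  have hnv : ‖T v‖ ^ 2 = M ^ 2 + s ^ 2 * m ^ 2 := by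
    rw [← real_inner_self_eq_norm_sq, hTv]
    simp only [inner_sub_left, inner_sub_right, real_inner_smul_left, real_inner_smul_right,
      real_inner_self_eq_norm_sq, horthT, horthT', h₁, h₂, norm_smul, Real.norm_eq_abs,
      mul_pow, sq_abs]
    ring
  have hA : (0:ℝ) < M ^ 2 + s ^ 2 * m ^ 2 := by positivity
  have hprod : ‖T u‖ * ‖T v‖ = M ^ 2 + s ^ 2 * m ^ 2 := by
    have h : (‖T u‖ * ‖T v‖) ^ 2 = (M ^ 2 + s ^ 2 * m ^ 2) ^ 2 := by
      rw [mul_pow, hnu, hnv]; ring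
    nlinarith [mul_nonneg (norm_nonneg (T u)) (norm_nonneg (T v)), hA.le]
  rw [hinner, hprod, hs2]
  have hD : (0:ℝ) < (1 + c) * M ^ 2 + (1 - c) * m ^ 2 := by positivity
  have key : (M ^ 2 - (1 - c) / (1 + c) * m ^ 2) / (M ^ 2 + (1 - c) / (1 + c) * m ^ 2) - c =
      (1 - c ^ 2) * (M ^ 2 - m ^ 2) / ((1 + c) * M ^ 2 + (1 - c) * m ^ 2) := by
    rw [div_sub' (by positivity), div_eq_div_iff (by positivity) hD.ne']
    field_simp
    ring
  rw [key, abs_of_nonneg]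
  apply div_nonneg _ hD.le
  apply mul_nonneg (by nlinarith)
  nlinarith [hmin.le]
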